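/- With g_λ(α) = H(α) + (1-α)(H((λ-α)/(1-α)) - 1) for 0 < α < λ < 1, the maximum of g_λ(α) over α ∈ (0, λ) is attained exactly at α = 2λ/3. -/

import Mathlib

/-- The binary entropy function. -/
noncomputable def binEnt (x : ℝ) : ℝ := -x * Real.logb 2 x - (1 - x) * Real.logb 2 (1 - x)

/-- `g_λ(α) = H(α) + (1-α)(H((λ-α)/(1-α)) - 1)`. -/
noncomputable def gFun (l a : ℝ) : ℝ := binEnt a + (1 - a) * (binEnt ((l - a) / (1 - a)) - 1)

/-- Simplified form of `gFun` valid on `(0, l)`. -/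
noncomputable def auxG (l a : ℝ) : ℝ :=
  -(a * Real.log a) / Real.log 2 - ((l - a) * Real.log (l - a)) / Real.log 2
    - (1 - l) * Real.logb 2 (1 - l) - 1 + a

lemma log2_pos : (0:ℝ) < Real.log 2 := Real.log_pos (by norm_num)

lemma gFun_eq_auxG (l : ℝ) (hl1 : l < 1) {a : ℝ} (ha : a ∈ Set.Ioo 0 l) :
    gFun l a = auxG l a := by
  obtain ⟨ha0, hal⟩ := ha
  have h1a : (0:ℝ) < 1 - a := by linarith
  have hla : (0:ℝ) < l - a := by linarith
  have h1l : (0:ℝ) < 1 - l := by linarith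
  have hx : 1 - (l - a) / (1 - a) = (1 - l) / (1 - a) := by field_simp; ring
  unfold gFun binEnt auxG
  rw [hx]
  simp only [Real.logb]
  rw [Real.log_div hla.ne' h1a.ne', Real.log_div h1l.ne' h1a.ne']
  field_simp
  ring

lemma continuous_auxG (l : ℝ) : Continuous (auxG l) := by
  unfold auxG
  have h1 : Continuous fun a : ℝ => a * Real.log a := Real.continuous_mul_log
  have h2 : Continuous fun a : ℝ => (l - a) * Real.log (l - a) :=
    h1.comp (continuous_const.sub continuous_id)
  exact ((((h1.neg.div_const _).sub (h2.div_const _)).sub continuous_const).sub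
    continuous_const).add continuous_id

lemma hasDerivAt_auxG (l : ℝ) {a : ℝ} (ha0 : 0 < a) (hal : a < l) :
    HasDerivAt (auxG l) ((Real.log (l - a) - Real.log a) / Real.log 2 + 1) a := by
  have h1 : HasDerivAt (fun x : ℝ => x * Real.log x) (Real.log a + 1) a :=
    Real.hasDerivAt_mul_log ha0.ne'
  have hsub : HasDerivAt (fun x : ℝ => l - x) (-1) a := by
    simpa using (hasDerivAt_id a).const_sub l
  have h2 : HasDerivAt (fun x : ℝ => (l - x) * Real.log (l - x))
      ((Real.log (l - a) + 1) * (-1)) a :=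
    (Real.hasDerivAt_mul_log (by linarith : l - a ≠ 0)).comp a hsub
  have H := ((((h1.neg.div_const (Real.log 2)).sub (h2.div_const (Real.log 2))).sub
      (hasDerivAt_const a ((1 - l) * Real.logb 2 (1 - l)))).sub
      (hasDerivAt_const a (1:ℝ))).add (hasDerivAt_id a)
  have hval : -(Real.log a + 1) / Real.log 2 - (Real.log (l - a) + 1) * (-1) / Real.log 2
      - 0 - 0 + 1 = (Real.log (l - a) - Real.log a) / Real.log 2 + 1 := by
    ring
  rw [hval] at H
  unfold auxG
  exact H

theorem gFun_max_at_two_thirds (l : ℝ) (hl0 : 0 < l) (hl1 : l < 1) :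
    2 * l / 3 ∈ Set.Ioo 0 l ∧
    ∀ a ∈ Set.Ioo (0 : ℝ) l, a ≠ 2 * l / 3 → gFun l a < gFun l (2 * l / 3) := by
  have hm0 : 0 < 2 * l / 3 := by linarith
  have hml : 2 * l / 3 < l := by linarith
  refine ⟨⟨hm0, hml⟩, ?_⟩
  have hmono : StrictMonoOn (auxG l) (Set.Icc 0 (2 * l / 3)) := by
    apply strictMonoOn_of_deriv_pos (convex_Icc _ _) (continuous_auxG l).continuousOn
    intro x hx
    rw [interior_Icc] at hx
    have hx0 : 0 < x := hx.1
    have hxl : x < l := lt_trans hx.2 hml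
    rw [(hasDerivAt_auxG l hx0 hxl).deriv]
    have hlog : Real.log (x / 2) < Real.log (l - x) :=
      Real.log_lt_log (by positivity) (by linarith [hx.2])
    rw [Real.log_div hx0.ne' two_ne_zero] at hlog
    have h : (-1 : ℝ) < (Real.log (l - x) - Real.log x) / Real.log 2 := by
      rw [lt_div_iff₀ log2_pos]; linarith
    linarith
  have hanti : StrictAntiOn (auxG l) (Set.Icc (2 * l / 3) l) := by
    apply strictAntiOn_of_deriv_neg (convex_Icc _ _) (continuous_auxG l).continuousOn
    intro x hx
    rw [interior_Icc] at hx
    have hx0 : 0 < x := lt_trans hm0 hx.1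
    have hxl : x < l := hx.2
    rw [(hasDerivAt_auxG l hx0 hxl).deriv]
    have hlog : Real.log (l - x) < Real.log (x / 2) :=
      Real.log_lt_log (by linarith) (by linarith [hx.1])
    rw [Real.log_div hx0.ne' two_ne_zero] at hlog
    have h : (Real.log (l - x) - Real.log x) / Real.log 2 < -1 := by
      rw [div_lt_iff₀ log2_pos]; linarith
    linarith
  intro a ha hne
  rw [gFun_eq_auxG l hl1 ha, gFun_eq_auxG l hl1 ⟨hm0, hml⟩]
  rcases lt_or_gt_of_ne hne with h | h
  · exact hmono ⟨ha.1.le, h.le⟩ ⟨hm0.le, le_refl _⟩ h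
  · exact hanti ⟨le_refl _, hml.le⟩ ⟨h.le, ha.2.le⟩ h
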